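/- arXiv:1212.5646 — 4 statements merged into one kernel-verified Lean document; each statement's English description precedes it below -/
import Mathlib

section
/- Let n ≥ 1 and let τ be a fixed-point-free involution of ZMod (2n) (a chord diagram with n chords). Then the number of cycles (orbits) of the surgery permutation p : ZMod (2n) → ZMod (2n), p(i) = τ(i+1), equals 1 + n − rank(M(τ)), where rank(M(τ)) is the rank over ZMod 2 of the interlacement matrix of τ. (This is the Circuit-Nullity Theorem: the number of circles obtained from a chord diagram by surgery along all chords is one plus the corank of its chord-by-chord intersection matrix.) -/
/-- The setoid on `β` whose classes are the cycles (orbits) of the permutation `p`. -/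
def sameCycleSetoid {β : Type*} (p : Equiv.Perm β) : Setoid β where
  r := p.SameCycle
  iseqv := ⟨fun x => Equiv.Perm.SameCycle.refl p x,
    fun h => h.symm, fun h₁ h₂ => h₁.trans h₂⟩

/-- The number of cycles (orbits, including fixed points) of a permutation. -/
noncomputable def cycleCount {β : Type*} (p : Equiv.Perm β) : ℕ :=
  Nat.card (Quotient (sameCycleSetoid p))

/-- `c` lies strictly inside the arc going from `a` (in the positive cyclic direction)
to `τ a`: starting at `a` and moving positively, one reaches `c` strictly before `τ a`. -/
def StrictlyInsideArc {N : ℕ} (τ : Equiv.Perm (ZMod N)) (a c : ZMod N) : Prop :=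
  0 < (c - a).val ∧ (c - a).val < (τ a - a).val

/-- The chords of `τ` through `a` and through `b` have disjoint endpoint sets and are
linked: exactly one of `b`, `τ b` lies strictly inside the arc of `a`. -/
def LinkedAt {N : ℕ} (τ : Equiv.Perm (ZMod N)) (a b : ZMod N) : Prop :=
  b ≠ a ∧ b ≠ τ a ∧ τ b ≠ a ∧ τ b ≠ τ a ∧
    Xor' (StrictlyInsideArc τ a b) (StrictlyInsideArc τ a (τ b))

open Classical in
/-- The interlacement (intersection) matrix of the chord diagram `τ`, as a matrix
over `ZMod 2` indexed by the points of the circle. -/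
noncomputable def interMatrix {N : ℕ} (τ : Equiv.Perm (ZMod N)) :
    Matrix (ZMod N) (ZMod N) (ZMod 2) :=
  Matrix.of fun a b => if LinkedAt τ a b then (1 : ZMod 2) else 0


open Finset

namespace CN


variable {β : Type*}

/-- The submodule of functions fixed by (precomposition with) a permutation. -/
def fixSub (g : Equiv.Perm β) : Submodule (ZMod 2) (β → ZMod 2) where
  carrier := {f | ∀ x, f (g x) = f x}
  add_mem' := fun hf hg x => by simp only [Pi.add_apply, hf x, hg x]
  zero_mem' := fun x => rfl
  smul_mem' := fun c f hf x => by simp only [Pi.smul_apply, hf x]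

lemma mem_fixSub {g : Equiv.Perm β} {f : β → ZMod 2} :
    f ∈ fixSub g ↔ ∀ x, f (g x) = f x := Iff.rfl

lemma fix_zpow {g : Equiv.Perm β} {f : β → ZMod 2} (hf : f ∈ fixSub g) :
    ∀ (i : ℤ) (x : β), f ((g ^ i) x) = f x := by
  have hinvfix : ∀ x, f (g⁻¹ x) = f x := by
    intro x
    have := hf (g⁻¹ x)
    simpa using this.symm
  intro i
  induction i using Int.induction_on with
  | zero => intro x; simp
  | succ k ih =>
      intro x
      have : (g ^ ((k : ℤ) + 1)) x = (g ^ (k : ℤ)) (g x) := by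
        rw [zpow_add_one]
        rfl
      rw [this, ih, hf]
  | pred k ih =>
      intro x
      have : (g ^ ((-k : ℤ) - 1)) x = (g ^ (-k : ℤ)) (g⁻¹ x) := by
        rw [zpow_sub_one]
        rfl
      rw [this, ih, hinvfix]

lemma finrank_fixSub [Fintype β] (g : Equiv.Perm β) :
    Module.finrank (ZMod 2) (fixSub g) = Nat.card (Quotient (sameCycleSetoid g)) := by
  classical
  haveI : Fintype (Quotient (sameCycleSetoid g)) := Fintype.ofFinite _
  set Φ : (Quotient (sameCycleSetoid g) → ZMod 2) →ₗ[ZMod 2] (β → ZMod 2) :=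
    LinearMap.funLeft (ZMod 2) (ZMod 2) (Quotient.mk (sameCycleSetoid g)) with hΦ
  have hsurj : Function.Surjective (Quotient.mk (sameCycleSetoid g)) := fun q =>
    Quotient.exists_rep q
  have hinj : Function.Injective Φ :=
    LinearMap.funLeft_injective_of_surjective _ _ _ hsurj
  have hrange : LinearMap.range Φ = fixSub g := by
    apply le_antisymm
    · rintro v ⟨h, rfl⟩
      intro x
      show h (Quotient.mk _ (g x)) = h (Quotient.mk _ x)
      congr 1
      exact Quotient.sound (show (sameCycleSetoid g).r (g x) x from
        Equiv.Perm.SameCycle.symm ⟨1, by simp⟩)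
    · intro f hf
      have hconst : ∀ a b : β, (sameCycleSetoid g).r a b → f a = f b := by
        rintro a b ⟨i, hi⟩
        rw [← hi, fix_zpow hf]
      refine ⟨Quotient.lift f hconst, ?_⟩
      funext x
      rfl
  have h1 : Module.finrank (ZMod 2) (LinearMap.range Φ) =
      Module.finrank (ZMod 2) (Quotient (sameCycleSetoid g) → ZMod 2) :=
    LinearMap.finrank_range_of_inj hinj
  rw [← hrange, h1, Module.finrank_pi, Nat.card_eq_fintype_card]



variable {β : Type*}

lemma sameCycle_involutive {g : Equiv.Perm β} (hinv : Function.Involutive g)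
    {x y : β} : g.SameCycle x y ↔ y = x ∨ y = g x := by
  have hg2 : g * g = 1 := Equiv.ext fun z => hinv z
  have hpow : ∀ i : ℤ, g ^ i = 1 ∨ g ^ i = g := by
    intro i
    rcases Int.even_or_odd i with ⟨k, hk⟩ | ⟨k, hk⟩
    · left
      have : i = 2 * k := by omega
      rw [this, zpow_mul]
      have : (g ^ (2 : ℤ)) = 1 := by rw [zpow_two, hg2]
      rw [this, one_zpow]
    · right
      have : i = 2 * k + 1 := by omega
      rw [this, zpow_add, zpow_mul]
      have h2 : (g ^ (2 : ℤ)) = 1 := by rw [zpow_two, hg2]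
      rw [h2, one_zpow, zpow_one, one_mul]
  constructor
  · rintro ⟨i, hi⟩
    rcases hpow i with h | h <;> rw [h] at hi
    · left; exact hi.symm
    · right; exact hi.symm
  · rintro (rfl | rfl)
    · exact ⟨0, by simp⟩
    · exact ⟨1, by simp⟩

lemma card_involutive [Fintype β] (g : Equiv.Perm β) (hinv : Function.Involutive g)
    (hfp : ∀ x, g x ≠ x) :
    2 * Nat.card (Quotient (sameCycleSetoid g)) = Fintype.card β := by
  classical
  haveI : Fintype (Quotient (sameCycleSetoid g)) := Fintype.ofFinite _
  rw [Nat.card_eq_fintype_card]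
  have hcard : Fintype.card β =
      ∑ q : Quotient (sameCycleSetoid g),
        Fintype.card {x : β // Quotient.mk (sameCycleSetoid g) x = q} := by
    rw [← Fintype.card_sigma]
    exact (Fintype.card_congr (Equiv.sigmaFiberEquiv (Quotient.mk (sameCycleSetoid g)))).symm
  have hfiber : ∀ q : Quotient (sameCycleSetoid g),
      Fintype.card {x : β // Quotient.mk (sameCycleSetoid g) x = q} = 2 := by
    intro q
    obtain ⟨x₀, rfl⟩ := Quotient.exists_rep q
    have hmem : ∀ x : β, Quotient.mk (sameCycleSetoid g) x = Quotient.mk _ x₀ ↔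
        (x = x₀ ∨ x = g x₀) := by
      intro x
      rw [Quotient.eq]
      show g.SameCycle x x₀ ↔ _
      constructor
      · intro h
        rcases (sameCycle_involutive hinv).1 h with h | h
        · left; exact h.symm
        · right; rw [h, hinv]
      · intro h
        rcases h with h | h
        · rw [h]
        · rw [h]
          exact Equiv.Perm.SameCycle.symm ((sameCycle_involutive hinv).2 (Or.inr rfl))
    rw [Fintype.card_congr (Equiv.subtypeEquivRight hmem)]
    have : ({x₀, g x₀} : Finset β).card = 2 := by
      rw [Finset.card_insert_of_notMem (by simp only [Finset.mem_singleton]; exact fun h => hfp x₀ h.symm),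
        Finset.card_singleton]
    rw [← this]
    rw [Fintype.card_subtype]
    congr 1
    ext x
    simp [Finset.mem_filter]
  rw [hcard]
  simp [hfiber, Finset.sum_const, mul_comm]



def zequiv (N : ℕ) [NeZero N] : Fin N ≃ ZMod N where
  toFun k := ((k : ℕ) : ZMod N)
  invFun c := ⟨c.val, c.val_lt⟩
  left_inv k := by
    ext
    simp [ZMod.val_cast_of_lt k.isLt]
  right_inv c := by
    simp [ZMod.natCast_rightInverse c]

lemma zsum {N : ℕ} [NeZero N] {M : Type*} [AddCommMonoid M] (F : ZMod N → M) :
    ∑ c, F c = ∑ j ∈ Finset.range N, F (j : ZMod N) := by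
  rw [← Fin.sum_univ_eq_sum_range (fun j => F (j : ZMod N)) N]
  exact (Fintype.sum_equiv (zequiv N) _ F fun k => rfl).symm

lemma zsum_shift {N : ℕ} [NeZero N] {M : Type*} [AddCommMonoid M] (a : ZMod N)
    (F : ZMod N → M) :
    ∑ c, F c = ∑ j ∈ Finset.range N, F (a + (j : ZMod N)) := by
  calc ∑ c, F c = ∑ c, F (a + c) := (Equiv.sum_comp (Equiv.addLeft a) F).symm
    _ = ∑ j ∈ Finset.range N, F (a + (j : ZMod N)) := zsum _

open Classical in
lemma key_sum {N : ℕ} [NeZero N] (τ : Equiv.Perm (ZMod N)) (a : ZMod N)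
    (ha : τ a ≠ a) (f : ZMod N → ZMod 2) :
    ∑ c, (if StrictlyInsideArc τ a c then (1 : ZMod 2) else 0) * (f c + f (c - 1)) =
      f (τ a - 1) + f a := by
  classical
  set m := (τ a - a).val with hm
  have hm0 : 1 ≤ m := by
    rcases Nat.eq_zero_or_pos m with h | h
    · exfalso
      have : τ a - a = 0 := by rwa [← ZMod.val_eq_zero]
      exact ha (by rwa [sub_eq_zero] at this)
    · exact h
  have hmN : m < N := ZMod.val_lt _
  rw [zsum_shift a]
  have hterm : ∀ j ∈ Finset.range N,
      (if StrictlyInsideArc τ a (a + (j : ZMod N)) then (1 : ZMod 2) else 0) *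
        (f (a + (j : ZMod N)) + f (a + (j : ZMod N) - 1)) =
      if (0 < j ∧ j < m) then (f (a + (j : ZMod N)) + f (a + (j : ZMod N) - 1)) else 0 := by
    intro j hj
    have hval : ((j : ZMod N) : ZMod N).val = j := ZMod.val_cast_of_lt (mem_range.mp hj)
    have hSIA : StrictlyInsideArc τ a (a + (j : ZMod N)) ↔ (0 < j ∧ j < m) := by
      unfold StrictlyInsideArc
      rw [add_sub_cancel_left, hval, hm]
    by_cases h : 0 < j ∧ j < m
    · rw [if_pos (hSIA.mpr h), if_pos h, one_mul]
    · rw [if_neg (fun hh => h (hSIA.mp hh)), if_neg h, zero_mul]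
  rw [Finset.sum_congr rfl hterm, ← Finset.sum_filter]
  have hfil : (Finset.range N).filter (fun j => 0 < j ∧ j < m) = Finset.Ico 1 m := by
    ext j
    simp only [mem_filter, mem_range, mem_Ico]
    omega
  rw [hfil, Finset.sum_Ico_eq_sum_range]
  have hterm2 : ∀ k ∈ Finset.range (m - 1),
      f (a + ((1 + k : ℕ) : ZMod N)) + f (a + ((1 + k : ℕ) : ZMod N) - 1) =
      (fun k : ℕ => f (a + (k : ZMod N))) (k + 1) - (fun k : ℕ => f (a + (k : ZMod N))) k := by
    intro k _
    have h1 : ((1 + k : ℕ) : ZMod N) = (k : ZMod N) + 1 := by push_cast; ring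
    have h2 : a + ((1 + k : ℕ) : ZMod N) - 1 = a + (k : ZMod N) := by rw [h1]; ring
    have h3 : a + ((1 + k : ℕ) : ZMod N) = a + ((k + 1 : ℕ) : ZMod N) := by
      congr 1
      push_cast
      ring
    rw [h2, h3]
    show _ = f (a + ((k+1 : ℕ) : ZMod N)) - f (a + (k : ZMod N))
    rw [CharTwo.sub_eq_add]
  rw [Finset.sum_congr rfl hterm2, Finset.sum_range_sub (fun k : ℕ => f (a + (k : ZMod N)))]
  have hma : a + ((m : ℕ) : ZMod N) = τ a := by
    rw [hm, ZMod.natCast_rightInverse (τ a - a)]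
    ring
  have hm1 : a + (((m - 1 : ℕ)) : ZMod N) = τ a - 1 := by
    rw [Nat.cast_sub hm0, ← add_sub_assoc, hma]
    norm_num
  rw [hm1, CharTwo.sub_eq_add, Nat.cast_zero, add_zero]



open Classical in
lemma inter_apply {N : ℕ} [NeZero N] (τ : Equiv.Perm (ZMod N))
    (hinv : Function.Involutive τ) (a b : ZMod N) :
    interMatrix τ a b = (if StrictlyInsideArc τ a b then (1 : ZMod 2) else 0) +
      (if StrictlyInsideArc τ a (τ b) then (1 : ZMod 2) else 0) := by
  have hSaa : ¬ StrictlyInsideArc τ a a := by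
    intro h
    rcases h with ⟨h1, _⟩
    simp [sub_self] at h1
  have hSata : ¬ StrictlyInsideArc τ a (τ a) := by
    intro h
    exact lt_irrefl _ h.2
  show (if LinkedAt τ a b then (1 : ZMod 2) else 0) = _
  by_cases hba : b = a
  · subst hba
    rw [if_neg (fun h => h.1 rfl), if_neg hSaa, if_neg hSata, add_zero]
  by_cases hbta : b = τ a
  · subst hbta
    have : τ (τ a) = a := hinv a
    rw [if_neg (fun h => h.2.1 rfl), if_neg hSata, this, if_neg hSaa, add_zero]
  · have h3 : τ b ≠ a := fun h => hbta (by rw [← h, hinv])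
    have h4 : τ b ≠ τ a := fun h => hba (τ.injective h)
    have hL : LinkedAt τ a b ↔
        Xor' (StrictlyInsideArc τ a b) (StrictlyInsideArc τ a (τ b)) := by
      unfold LinkedAt
      simp [hba, hbta, h3, h4]
    by_cases h1 : StrictlyInsideArc τ a b <;> by_cases h2 : StrictlyInsideArc τ a (τ b)
    · rw [if_neg (fun h => (hL.1 h).elim (fun u => u.2 h2) (fun u => u.2 h1)),
        if_pos h1, if_pos h2]
      decide
    · rw [if_pos (hL.2 (Or.inl ⟨h1, h2⟩)), if_pos h1, if_neg h2, add_zero]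
    · rw [if_pos (hL.2 (Or.inr ⟨h2, h1⟩)), if_neg h1, if_pos h2, zero_add]
    · rw [if_neg (fun h => (hL.1 h).elim (fun u => h1 u.1) (fun u => h2 u.1)),
        if_neg h1, if_neg h2, add_zero]

open Classical in
lemma mulVec_eq {N : ℕ} [NeZero N] (τ : Equiv.Perm (ZMod N))
    (hinv : Function.Involutive τ) (v : ZMod N → ZMod 2) (a : ZMod N) :
    (interMatrix τ).mulVec v a =
      ∑ c, (if StrictlyInsideArc τ a c then (1 : ZMod 2) else 0) * (v c + v (τ c)) := by
  show ∑ b, interMatrix τ a b * v b = _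
  calc ∑ b, interMatrix τ a b * v b
      = ∑ b, ((if StrictlyInsideArc τ a b then (1 : ZMod 2) else 0) * v b +
          (if StrictlyInsideArc τ a (τ b) then (1 : ZMod 2) else 0) * v b) := by
        refine Finset.sum_congr rfl fun b _ => ?_
        rw [inter_apply τ hinv, add_mul]
    _ = (∑ b, (if StrictlyInsideArc τ a b then (1 : ZMod 2) else 0) * v b) +
        ∑ b, (if StrictlyInsideArc τ a (τ b) then (1 : ZMod 2) else 0) * v b := by
        rw [Finset.sum_add_distrib]
    _ = (∑ b, (if StrictlyInsideArc τ a b then (1 : ZMod 2) else 0) * v b) +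
        ∑ c, (if StrictlyInsideArc τ a c then (1 : ZMod 2) else 0) * v (τ c) := by
        congr 1
        have := Equiv.sum_comp (τ : ZMod N ≃ ZMod N)
          (fun c => (if StrictlyInsideArc τ a c then (1 : ZMod 2) else 0) * v (τ c))
        rw [← this]
        refine Finset.sum_congr rfl fun b _ => ?_
        show _ = (if StrictlyInsideArc τ a (τ b) then (1 : ZMod 2) else 0) * v (τ (τ b))
        rw [hinv b]
    _ = _ := by
        rw [← Finset.sum_add_distrib]
        refine Finset.sum_congr rfl fun c _ => ?_
        ring

end CN

/-- **Circuit-Nullity Theorem.** For a chord diagram with `n` chords, modelled as a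
fixed-point-free involution `τ` of `ZMod (2*n)`, the number of cycles of the surgery
permutation `p i = τ (i + 1)` equals `1 + n - rank (M τ)`, where the rank of the
interlacement matrix is taken over `ZMod 2`. -/
theorem circuit_nullity (n : ℕ) [NeZero n] (τ : Equiv.Perm (ZMod (2 * n)))
    (hinv : Function.Involutive τ) (hfp : ∀ i, τ i ≠ i) :
    cycleCount (τ * Equiv.addRight (1 : ZMod (2 * n))) =
      1 + n - (interMatrix τ).rank := by
  classical
  haveI : NeZero (2 * n) := ⟨by have := NeZero.ne n; omega⟩
  set p : Equiv.Perm (ZMod (2 * n)) := τ * Equiv.addRight (1 : ZMod (2 * n)) with hpdef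
  have hp : ∀ x, p x = τ (x + 1) := fun x => rfl
  have hadd2 : ∀ x : ZMod 2, x + x = 0 := by decide
  -- functions fixed by p satisfy f (τ c - 1) = f c
  have hpfix : ∀ f : ZMod (2 * n) → ZMod 2, f ∈ CN.fixSub p →
      ∀ c, f (τ c - 1) = f c := by
    intro f hf c
    have h := hf (τ c - 1)
    rw [hp, sub_add_cancel, hinv] at h
    exact h.symm
  set T : (ZMod (2 * n) → ZMod 2) ≃ₗ[ZMod 2] (ZMod (2 * n) → ZMod 2) :=
    LinearEquiv.funCongrLeft (ZMod 2) (ZMod 2) (Equiv.subRight (1 : ZMod (2 * n))) with hTdef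
  have hTapp : ∀ (f : ZMod (2 * n) → ZMod 2) (b : ZMod (2 * n)), T f b = f (b - 1) :=
    fun f b => rfl
  set E : Submodule (ZMod 2) (ZMod (2 * n) → ZMod 2) := CN.fixSub τ with hEdef
  set Y : Submodule (ZMod 2) (ZMod (2 * n) → ZMod 2) :=
    (CN.fixSub p).map (T.toLinearMap) with hYdef
  -- the kernel of the interlacement matrix
  have hker : LinearMap.ker (interMatrix τ).mulVecLin = E ⊔ Y := by
    ext v
    rw [LinearMap.mem_ker]
    constructor
    · intro h
      set d : ZMod (2 * n) → ZMod 2 := fun c => v c + v (τ c) with hddef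
      have hd : ∀ a, (∑ c, (if StrictlyInsideArc τ a c then (1 : ZMod 2) else 0) * d c)
          = 0 := by
        intro a
        rw [← CN.mulVec_eq τ hinv v a]
        have := congrFun h a
        rwa [Matrix.mulVecLin_apply] at this
      have hdsum : ∑ c, d c = 0 := by
        simp only [hddef]
        rw [Finset.sum_add_distrib]
        rw [Equiv.sum_comp (τ : ZMod (2 * n) ≃ ZMod (2 * n)) v]
        exact hadd2 _
      set f : ZMod (2 * n) → ZMod 2 :=
        fun c => ∑ j ∈ Finset.range (c.val + 1), d ((j : ℕ) : ZMod (2 * n)) with hfdef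
      have hstep : ∀ c, f c + f (c - 1) = d c := by
        intro c
        by_cases hc : c = 0
        · subst hc
          have h0 : f 0 = d 0 := by
            simp only [hfdef, ZMod.val_zero, zero_add, Finset.sum_range_one, Nat.cast_zero]
          have hm1 : (0 : ZMod (2 * n)) - 1 = (((2 * n - 1 : ℕ)) : ZMod (2 * n)) := by
            have h2n : 1 ≤ 2 * n := by have := NeZero.ne n; omega
            rw [Nat.cast_sub h2n, ZMod.natCast_self, Nat.cast_one, zero_sub]
          have hval : (((2 * n - 1 : ℕ)) : ZMod (2 * n)).val = 2 * n - 1 :=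
            ZMod.val_cast_of_lt (by have := NeZero.ne n; omega)
          have h1 : f ((0 : ZMod (2 * n)) - 1) = ∑ c, d c := by
            rw [hm1]
            simp only [hfdef, hval]
            have : 2 * n - 1 + 1 = 2 * n := by have := NeZero.ne n; omega
            rw [this, ← CN.zsum d]
          rw [h0, h1, hdsum, add_zero]
        · have hv0 : c.val ≠ 0 := by
            intro h0
            apply hc
            have h' := ZMod.natCast_rightInverse c
            rw [h0, Nat.cast_zero] at h'
            exact h'.symm
          have hc1 : c - 1 = (((c.val - 1 : ℕ)) : ZMod (2 * n)) := by
            conv_lhs => rw [← ZMod.natCast_rightInverse c]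
            rw [Nat.cast_sub (Nat.one_le_iff_ne_zero.mpr hv0), Nat.cast_one]
          have hval1 : ((((c.val - 1 : ℕ)) : ZMod (2 * n))).val = c.val - 1 :=
            ZMod.val_cast_of_lt (by have := ZMod.val_lt c; omega)
          have hfc1 : f (c - 1) = ∑ j ∈ Finset.range c.val, d ((j : ℕ) : ZMod (2 * n)) := by
            rw [hc1]
            simp only [hfdef, hval1]
            have hiter : c.val - 1 + 1 = c.val := Nat.succ_pred_eq_of_pos (Nat.pos_of_ne_zero hv0)
            rw [hiter]
          have hfc : f c = f (c - 1) + d c := by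
            rw [hfc1]
            show (∑ j ∈ Finset.range (c.val + 1), d ((j : ℕ) : ZMod (2 * n))) = _
            rw [Finset.sum_range_succ, ZMod.natCast_rightInverse c]
          rw [hfc]
          have := hadd2 (f (c - 1))
          calc f (c - 1) + d c + f (c - 1) = d c + (f (c - 1) + f (c - 1)) := by ring
            _ = d c := by rw [this, add_zero]
      have hfq : ∀ a, f (τ a - 1) = f a := by
        intro a
        have h1 := hd a
        have h2 : ∑ c, (if StrictlyInsideArc τ a c then (1 : ZMod 2) else 0) * d c
            = ∑ c, (if StrictlyInsideArc τ a c then (1 : ZMod 2) else 0) * (f c + f (c - 1)) := by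
          refine Finset.sum_congr rfl fun c _ => ?_
          rw [hstep c]
        rw [h2, CN.key_sum τ a (hfp a) f] at h1
        have := hadd2 (f a)
        calc f (τ a - 1) = f (τ a - 1) + (f a + f a) := by rw [this, add_zero]
          _ = (f (τ a - 1) + f a) + f a := by ring
          _ = f a := by rw [h1, zero_add]
      have hfP : f ∈ CN.fixSub p := by
        intro x
        rw [hp]
        have := hfq (τ (x + 1))
        rw [hinv] at this
        rw [← this, add_sub_cancel_right]
      have hvE : v - T f ∈ E := by
        intro b
        simp only [Pi.sub_apply]
        rw [hTapp, hTapp]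
        have h1 : f (τ b - 1) = f b := hfq b
        have h2 : f b + f (b - 1) = v b + v (τ b) := hstep b
        have hsub2 : ∀ x y : ZMod 2, x - y = x + y := by decide
        rw [hsub2, hsub2, h1]
        have htwo : (2 : ZMod 2) = 0 := by decide
        linear_combination h2 + (v (τ b) - f (b - 1)) * htwo
      refine Submodule.mem_sup.2 ⟨v - T f, hvE, T f, ?_, sub_add_cancel v (T f)⟩
      exact Submodule.mem_map.2 ⟨f, hfP, rfl⟩
    · intro h
      rcases Submodule.mem_sup.1 h with ⟨e, he, y, hy, rfl⟩
      rcases Submodule.mem_map.1 hy with ⟨f, hf, rfl⟩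
      rw [map_add]
      have h1 : (interMatrix τ).mulVecLin e = 0 := by
        funext a
        rw [Matrix.mulVecLin_apply, CN.mulVec_eq τ hinv e a]
        have : ∀ c : ZMod (2 * n), e c + e (τ c) = 0 := fun c => by
          rw [he c]; exact hadd2 _
        simp only [this, mul_zero, Finset.sum_const_zero, Pi.zero_apply]
      have h2 : (interMatrix τ).mulVecLin (T.toLinearMap f) = 0 := by
        funext a
        rw [Matrix.mulVecLin_apply, CN.mulVec_eq τ hinv _ a]
        have hterm : ∀ c : ZMod (2 * n),
            T.toLinearMap f c + T.toLinearMap f (τ c) = f c + f (c - 1) := by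
          intro c
          show T f c + T f (τ c) = _
          rw [hTapp, hTapp, hpfix f hf c, add_comm]
        simp only [hterm]
        rw [CN.key_sum τ a (hfp a) f, hpfix f hf a, Pi.zero_apply]
        exact hadd2 _
      rw [h1, h2, add_zero]
  -- E ⊓ Y is the span of the constant function 1
  have hinf : E ⊓ Y = Submodule.span (ZMod 2)
      {(fun _ => 1 : ZMod (2 * n) → ZMod 2)} := by
    apply le_antisymm
    · rintro v ⟨hvE, hvY⟩
      rcases Submodule.mem_map.1 hvY with ⟨f, hf, rfl⟩
      have h1 : ∀ b, f (τ b - 1) = f b := hpfix f hf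
      have h2 : ∀ b : ZMod (2 * n), f b = f (b - 1) := by
        intro b
        have := hvE b
        rw [show (T.toLinearMap f : ZMod (2*n) → ZMod 2) = T f from rfl] at this
        rw [hTapp, hTapp] at this
        rw [← h1 b, this]
      have h3 : ∀ k : ℕ, f ((k : ℕ) : ZMod (2 * n)) = f 0 := by
        intro k
        induction k with
        | zero => simp
        | succ k ih =>
          have : (((k + 1 : ℕ)) : ZMod (2 * n)) = ((k : ℕ) : ZMod (2 * n)) + 1 := by
            push_cast; ring
          rw [this]
          have := h2 (((k : ℕ) : ZMod (2 * n)) + 1)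
          rw [add_sub_cancel_right] at this
          rw [this, ih]
      have h4 : ∀ c : ZMod (2 * n), f c = f 0 := by
        intro c
        conv_lhs => rw [← ZMod.natCast_rightInverse c]
        exact h3 c.val
      have h5 : (T.toLinearMap f : ZMod (2*n) → ZMod 2) = f 0 • (fun _ => 1) := by
        funext b
        show T f b = _
        rw [hTapp, h4 (b - 1)]
        simp
      rw [h5]
      exact Submodule.smul_mem _ _ (Submodule.mem_span_singleton_self _)
    · rw [Submodule.span_le, Set.singleton_subset_iff]
      refine ⟨fun x => rfl, ?_⟩
      exact Submodule.mem_map.2 ⟨(fun _ => 1), fun x => rfl, rfl⟩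
  -- dimension counting
  have hcardZ : Fintype.card (ZMod (2 * n)) = 2 * n := ZMod.card (2 * n)
  have hdimE : Module.finrank (ZMod 2) E = n := by
    have h1 := CN.finrank_fixSub τ
    have h2 := CN.card_involutive τ hinv hfp
    rw [hcardZ] at h2
    rw [hEdef, h1]
    omega
  have hdimY : Module.finrank (ZMod 2) Y = cycleCount p := by
    rw [hYdef, LinearEquiv.finrank_map_eq T (CN.fixSub p), CN.finrank_fixSub p]
    rfl
  have hdimInf : Module.finrank (ZMod 2) (E ⊓ Y : Submodule (ZMod 2) _) = 1 := by
    rw [hinf]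
    refine finrank_span_singleton ?_
    intro hcon
    have := congrFun hcon 0
    simp at this
  have hsum := Submodule.finrank_sup_add_finrank_inf_eq E Y
  have hrn := LinearMap.finrank_range_add_finrank_ker (interMatrix τ).mulVecLin
  rw [Module.finrank_pi, hcardZ] at hrn
  have hrk : (interMatrix τ).rank
      = Module.finrank (ZMod 2) (LinearMap.range (interMatrix τ).mulVecLin) := rfl
  rw [hker] at hrn
  rw [hdimE, hdimY, hdimInf] at hsum
  rw [hrk]
  omega
end

section
/- Let n ≥ 1 and let τ be a fixed-point-free involution of ZMod (2n) (a chord diagram with n chords). The surgery permutation p(i) = τ(i+1) has exactly n + 1 cycles if and only if no two chords of the diagram are linked (equivalently, if and only if the interlacement matrix M(τ) is the zero matrix). -/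
namespace SurgeryAux

open Equiv Equiv.Perm

private lemma pow_succ_apply {β : Type*} (σ : Equiv.Perm β) (i : ℕ) (y : β) :
    (σ ^ (i + 1)) y = σ ((σ ^ i) y) := by
  rw [pow_succ', Equiv.Perm.mul_apply]

section


open Equiv Equiv.Perm

variable {β : Type*} [Finite β]

/-- Generated-relation principle: any reflexive transitive relation containing the
steps `u ↦ σ u` contains `SameCycle σ`. -/
lemma sameCycle_rel {σ : Perm β} {r : β → β → Prop} (hrefl : ∀ u, r u u)
    (htrans : ∀ {u v w}, r u v → r v w → r u w)
    (hstep : ∀ u, r u (σ u)) {u v : β} (h : σ.SameCycle u v) : r u v := by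
  obtain ⟨i, -, hi⟩ := h.exists_pow_eq'
  have key : ∀ j : ℕ, r u ((σ ^ j) u) := by
    intro j
    induction j with
    | zero => simpa using hrefl u
    | succ k ih =>
        have h2 := hstep ((σ ^ k) u)
        have h3 : (σ ^ (k+1)) u = σ ((σ ^ k) u) := by
          rw [pow_succ', Equiv.Perm.mul_apply]
        exact htrans ih (h3 ▸ h2)
  exact hi ▸ key i


end

section


open Equiv Equiv.Perm

variable {β : Type*} [Finite β]

lemma card_quot_le (r s : Setoid β) (h : ∀ a b, r.r a b → s.r a b) :
    Nat.card (Quotient s) ≤ Nat.card (Quotient r) := by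
  apply Nat.card_le_card_of_surjective
    (Quotient.lift (fun a => Quotient.mk s a) (fun a b hab => Quotient.sound (h a b hab)))
  intro q
  obtain ⟨a, rfl⟩ := Quotient.exists_rep q
  exact ⟨Quotient.mk r a, rfl⟩

lemma card_quot_lt (r s : Setoid β) (h : ∀ a b, r.r a b → s.r a b)
    (x y : β) (hs : s.r x y) (hr : ¬ r.r x y) :
    Nat.card (Quotient s) < Nat.card (Quotient r) := by
  set f : Quotient r → Quotient s :=
    Quotient.lift (fun a => Quotient.mk s a) (fun a b hab => Quotient.sound (h a b hab)) with hf
  have hsurj : Function.Surjective f := by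
    intro q
    obtain ⟨a, rfl⟩ := Quotient.exists_rep q
    exact ⟨Quotient.mk r a, rfl⟩
  have hle := Nat.card_le_card_of_surjective f hsurj
  refine lt_of_le_of_ne hle (fun hEq => ?_)
  have hbij : Function.Bijective f :=
    (Nat.bijective_iff_surjective_and_card f).2 ⟨hsurj, hEq.symm⟩
  have heq2 : Quotient.mk r x = Quotient.mk r y := by
    apply hbij.1
    show f (Quotient.mk r x) = f (Quotient.mk r y)
    simpa [hf] using Quotient.sound hs
  exact hr (Quotient.exact heq2)


end

section


open Equiv Equiv.Perm

variable {β : Type*} [Finite β]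

lemma pow_mod_period {σ : Perm β} {y : β} {m : ℕ} (h : (σ ^ m) y = y) :
    ∀ i, (σ ^ i) y = (σ ^ (i % m)) y := by
  intro i
  rcases Nat.eq_zero_or_pos m with rfl | hm
  · simp
  induction i using Nat.strong_induction_on with
  | _ i ih =>
    rcases lt_or_ge i m with hlt | hge
    · rw [Nat.mod_eq_of_lt hlt]
    · have h1 : i = (i - m) + m := by omega
      have h2 : (σ ^ i) y = (σ ^ (i - m)) y := by
        conv_lhs => rw [h1]
        rw [pow_add, Equiv.Perm.mul_apply, h]
      rw [h2, ih (i - m) (by omega)]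
      congr 1
      conv_rhs => rw [h1, Nat.add_mod_right]

section Swap
variable [DecidableEq β] {σ : Perm β} {x y : β}


/-- If `x` and `y` are not on the same cycle of `σ`, they are on the same cycle
of `swap x y * σ`. -/
lemma sameCycle_swap_mul_of_not (hxy : x ≠ y)
    (h : ¬ σ.SameCycle x y) : (Equiv.swap x y * σ).SameCycle x y := by
  set σ' := Equiv.swap x y * σ with hσ'
  have happ : ∀ z, σ' z = Equiv.swap x y (σ z) := fun z => rfl
  have hex : ∃ k, 0 < k ∧ (σ ^ k) y = y :=
    ⟨orderOf σ, orderOf_pos σ, by rw [pow_orderOf_eq_one]; rfl⟩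
  classical
  obtain ⟨hkpos, hky⟩ := Nat.find_spec hex
  set k := Nat.find hex with hk
  have hmin : ∀ j, 0 < j → j < k → (σ ^ j) y ≠ y := fun j hj hjk hyj =>
    Nat.find_min hex hjk ⟨hj, hyj⟩
  have hnx : ∀ j, (σ ^ j) y ≠ x := fun j hj =>
    h (Equiv.Perm.SameCycle.symm ⟨(j : ℤ), by rw [zpow_natCast]; exact hj⟩)
  obtain ⟨k', hkk⟩ : ∃ k', k = k' + 1 := ⟨k - 1, by omega⟩
  have htraj : ∀ j ≤ k', (σ' ^ j) y = (σ ^ j) y := by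
    intro j hj
    induction j with
    | zero => rfl
    | succ i ih =>
      rw [pow_succ_apply, pow_succ_apply, ih (by omega), happ, ← pow_succ_apply]
      exact Equiv.swap_apply_of_ne_of_ne (hnx (i+1))
        (hmin (i+1) (by omega) (by omega))
  refine Equiv.Perm.SameCycle.symm ⟨((k' + 1 : ℕ) : ℤ), ?_⟩
  rw [zpow_natCast, pow_succ_apply, htraj k' le_rfl, happ, ← pow_succ_apply, ← hkk, hky,
    Equiv.swap_apply_right]

/-- If `x` and `y` are on the same cycle of `σ`, they are not on the same cycle
of `swap x y * σ`. -/
lemma not_sameCycle_swap_mul (hxy : x ≠ y)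
    (h : σ.SameCycle x y) : ¬ (Equiv.swap x y * σ).SameCycle x y := by
  set σ' := Equiv.swap x y * σ with hσ'
  have happ : ∀ z, σ' z = Equiv.swap x y (σ z) := fun z => rfl
  have hex : ∃ k, 0 < k ∧ ((σ ^ k) y = x ∨ (σ ^ k) y = y) :=
    ⟨orderOf σ, orderOf_pos σ, Or.inr (by rw [pow_orderOf_eq_one]; rfl)⟩
  classical
  obtain ⟨hkpos, hky⟩ := Nat.find_spec hex
  set k := Nat.find hex with hk
  have hmin : ∀ j, 0 < j → j < k → (σ ^ j) y ≠ x ∧ (σ ^ j) y ≠ y := by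
    intro j hj hjk
    constructor <;> intro hyj <;> exact Nat.find_min hex hjk ⟨hj, by tauto⟩
  obtain ⟨k', hkk⟩ : ∃ k', k = k' + 1 := ⟨k - 1, by omega⟩
  have htraj : ∀ j ≤ k', (σ' ^ j) y = (σ ^ j) y := by
    intro j hj
    induction j with
    | zero => rfl
    | succ i ih =>
      rw [pow_succ_apply, pow_succ_apply, ih (by omega), happ, ← pow_succ_apply]
      exact Equiv.swap_apply_of_ne_of_ne ((hmin (i+1) (by omega) (by omega)).1)
        ((hmin (i+1) (by omega) (by omega)).2)
  -- the case (σ ^ k) y = y is impossible: then x is not on y's σ-cycle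
  have hkx : (σ ^ k) y = x := by
    rcases hky with hx | hy
    · exact hx
    · exfalso
      obtain ⟨i, -, hi⟩ := h.symm.exists_pow_eq'
      have := pow_mod_period hy i
      rw [hi] at this
      have hlt : i % k < k := Nat.mod_lt _ hkpos
      rcases Nat.eq_zero_or_pos (i % k) with h0 | hpos
      · rw [h0] at this; simp at this; exact hxy this
      · exact (hmin _ hpos hlt).1 this.symm
  -- so σ'-period of y is k, and its σ'-cycle avoids x
  have hperiod : (σ' ^ k) y = y := by
    rw [hkk, pow_succ_apply, htraj k' le_rfl, happ, ← pow_succ_apply, ← hkk, hkx,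
      Equiv.swap_apply_left]
  intro hcon
  obtain ⟨i, -, hi⟩ := hcon.symm.exists_pow_eq'
  have h2 := pow_mod_period hperiod i
  rw [hi] at h2
  have hlt : i % k < k := Nat.mod_lt _ hkpos
  rcases Nat.eq_zero_or_pos (i % k) with h0 | hpos
  · rw [h0] at h2; simp at h2; exact hxy h2
  · rw [htraj (i % k) (by omega)] at h2
    exact (hmin _ hpos hlt).1 h2.symm

end Swap

end

section


open Equiv Equiv.Perm

variable {β : Type*} [Finite β] [DecidableEq β] {σ : Perm β} {x y : β}

lemma sameCycle_one_step (σ : Perm β) (u : β) : σ.SameCycle u (σ u) :=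
  ⟨1, by simp⟩

/-- merging: if `x, y` are on different cycles, the cycle count drops. -/
lemma cyc_swap_lt_of_not_sameCycle (hxy : x ≠ y) (h : ¬ σ.SameCycle x y) :
    cycleCount (Equiv.swap x y * σ) < cycleCount σ := by
  set σ' := Equiv.swap x y * σ with hσ'
  have happ : ∀ z, σ' z = Equiv.swap x y (σ z) := fun z => rfl
  have hincl : ∀ u v, σ.SameCycle u v → σ'.SameCycle u v := by
    intro u v huv
    refine sameCycle_rel (fun u => Equiv.Perm.SameCycle.refl _ u)
      (fun h1 h2 => h1.trans h2) ?_ huv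
    intro u
    have h1 : σ'.SameCycle u (σ' u) := sameCycle_one_step σ' u
    rcases eq_or_ne (σ u) x with hux | hux
    · have : σ' u = y := by rw [happ, hux, Equiv.swap_apply_left]
      rw [hux]
      exact (this ▸ h1).trans (sameCycle_swap_mul_of_not hxy h).symm
    · rcases eq_or_ne (σ u) y with huy | huy
      · have : σ' u = x := by rw [happ, huy, Equiv.swap_apply_right]
        rw [huy]
        exact (this ▸ h1).trans (sameCycle_swap_mul_of_not hxy h)
      · have : σ' u = σ u := by rw [happ, Equiv.swap_apply_of_ne_of_ne hux huy]
        exact this ▸ h1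
  exact card_quot_lt (sameCycleSetoid σ) (sameCycleSetoid σ') hincl x y
    (sameCycle_swap_mul_of_not hxy h) h

/-- splitting: if `x, y` are on the same cycle, the cycle count increases. -/
lemma cyc_lt_swap_of_sameCycle (hxy : x ≠ y) (h : σ.SameCycle x y) :
    cycleCount σ < cycleCount (Equiv.swap x y * σ) := by
  set σ' := Equiv.swap x y * σ with hσ'
  have happ : ∀ z, σ' z = Equiv.swap x y (σ z) := fun z => rfl
  have hincl : ∀ u v, σ'.SameCycle u v → σ.SameCycle u v := by
    intro u v huv
    refine sameCycle_rel (fun u => Equiv.Perm.SameCycle.refl _ u)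
      (fun h1 h2 => h1.trans h2) ?_ huv
    intro u
    have h1 : σ.SameCycle u (σ u) := sameCycle_one_step σ u
    rcases eq_or_ne (σ u) x with hux | hux
    · have h2 : σ' u = y := by rw [happ, hux, Equiv.swap_apply_left]
      rw [h2]
      exact (hux ▸ h1).trans h
    · rcases eq_or_ne (σ u) y with huy | huy
      · have h2 : σ' u = x := by rw [happ, huy, Equiv.swap_apply_right]
        rw [h2]
        exact (huy ▸ h1).trans h.symm
      · have h2 : σ' u = σ u := by rw [happ, Equiv.swap_apply_of_ne_of_ne hux huy]
        exact h2 ▸ h1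
  exact card_quot_lt (sameCycleSetoid σ') (sameCycleSetoid σ) hincl x y h
    (not_sameCycle_swap_mul hxy h)


end

section


open Equiv Equiv.Perm

variable {β : Type*} [Finite β] [DecidableEq β] {σ : Perm β} {x y : β}

/-- multiplying by a swap increases the cycle count by at most one. -/
lemma cyc_swap_le (σ : Perm β) (x y : β) :
    cycleCount (Equiv.swap x y * σ) ≤ cycleCount σ + 1 := by
  classical
  set σ' := Equiv.swap x y * σ with hσ'
  have happ : ∀ z, σ' z = Equiv.swap x y (σ z) := fun z => rfl
  set R : β → β → Prop := fun u v => σ'.SameCycle u v ∨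
      (σ'.SameCycle u x ∧ σ'.SameCycle y v) ∨ (σ'.SameCycle u y ∧ σ'.SameCycle x v) with hR
  have hrefl : ∀ u, R u u := fun u => Or.inl (Equiv.Perm.SameCycle.refl _ u)
  have hsymm : ∀ {u v}, R u v → R v u := by
    rintro u v (h1 | ⟨h1, h2⟩ | ⟨h1, h2⟩)
    · exact Or.inl h1.symm
    · exact Or.inr (Or.inr ⟨h2.symm, h1.symm⟩)
    · exact Or.inr (Or.inl ⟨h2.symm, h1.symm⟩)
  have htrans : ∀ {u v w}, R u v → R v w → R u w := by
    rintro u v w (h1 | ⟨h1, h2⟩ | ⟨h1, h2⟩) (h3 | ⟨h3, h4⟩ | ⟨h3, h4⟩)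
    · exact Or.inl (h1.trans h3)
    · exact Or.inr (Or.inl ⟨h1.trans h3, h4⟩)
    · exact Or.inr (Or.inr ⟨h1.trans h3, h4⟩)
    · exact Or.inr (Or.inl ⟨h1, h2.trans h3⟩)
    · exact Or.inl (h1.trans (((h2.trans h3).symm).trans h4))
    · exact Or.inl (h1.trans h4)
    · exact Or.inr (Or.inr ⟨h1, h2.trans h3⟩)
    · exact Or.inl (h1.trans h4)
    · exact Or.inl (h1.trans (((h2.trans h3).symm).trans h4))
  have hstep : ∀ u, R u (σ u) := by
    intro u
    have h1 : σ'.SameCycle u (σ' u) := ⟨1, by simp⟩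
    rcases eq_or_ne (σ u) x with hux | hux
    · have h2 : σ' u = y := by rw [happ, hux, Equiv.swap_apply_left]
      rw [hux]
      exact Or.inr (Or.inr ⟨h2 ▸ h1, Equiv.Perm.SameCycle.refl _ _⟩)
    · rcases eq_or_ne (σ u) y with huy | huy
      · have h2 : σ' u = x := by rw [happ, huy, Equiv.swap_apply_right]
        rw [huy]
        exact Or.inr (Or.inl ⟨h2 ▸ h1, Equiv.Perm.SameCycle.refl _ _⟩)
      · have h2 : σ' u = σ u := by rw [happ, Equiv.swap_apply_of_ne_of_ne hux huy]
        exact Or.inl (h2 ▸ h1)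
  set rs : Setoid β := ⟨R, hrefl, fun h => hsymm h, fun h1 h2 => htrans h1 h2⟩ with hrs
  have hincl : ∀ u v, σ.SameCycle u v → R u v := fun u v huv =>
    sameCycle_rel hrefl (fun h1 h2 => htrans h1 h2) hstep huv
  have hcard1 : Nat.card (Quotient rs) ≤ cycleCount σ :=
    card_quot_le (sameCycleSetoid σ) rs hincl
  have hwd : ∀ u v : β, σ'.SameCycle u v →
      (if σ'.SameCycle u y then (Sum.inr PUnit.unit.{1} : Quotient rs ⊕ PUnit.{1})
        else Sum.inl (Quotient.mk rs u)) =
      (if σ'.SameCycle v y then (Sum.inr PUnit.unit.{1} : Quotient rs ⊕ PUnit.{1})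
        else Sum.inl (Quotient.mk rs v)) := by
    intro u v huv
    by_cases hu : σ'.SameCycle u y
    · rw [if_pos hu, if_pos (huv.symm.trans hu)]
    · rw [if_neg hu, if_neg (fun hv => hu (huv.trans hv))]
      exact congrArg Sum.inl (Quotient.sound (Or.inl huv))
  set F : Quotient (sameCycleSetoid σ') → Quotient rs ⊕ PUnit.{1} :=
    Quotient.lift (fun u => if σ'.SameCycle u y then (Sum.inr PUnit.unit.{1} : Quotient rs ⊕ PUnit.{1})
      else Sum.inl (Quotient.mk rs u)) (fun u v huv => hwd u v huv) with hF
  have hinj : Function.Injective F := by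
    intro q1 q2
    refine Quotient.inductionOn₂ q1 q2 ?_
    intro u v h
    simp only [hF, Quotient.lift_mk] at h
    by_cases hu : σ'.SameCycle u y <;> by_cases hv : σ'.SameCycle v y
    · exact Quotient.sound (hu.trans hv.symm)
    · rw [if_pos hu, if_neg hv] at h; exact absurd h (by simp)
    · rw [if_neg hu, if_pos hv] at h; exact absurd h (by simp)
    · rw [if_neg hu, if_neg hv] at h
      have h2 := Quotient.exact (Sum.inl.inj h)
      rcases h2 with h2 | ⟨h2, h3⟩ | ⟨h2, h3⟩
      · exact Quotient.sound h2
      · exact absurd h3.symm hv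
      · exact absurd h2 hu
  have hcard2 : cycleCount σ' ≤ Nat.card (Quotient rs ⊕ PUnit.{1}) :=
    Nat.card_le_card_of_injective F hinj
  have hcard3 : Nat.card (Quotient rs ⊕ PUnit.{1}) = Nat.card (Quotient rs) + 1 := by
    rw [Nat.card_sum]; simp
  omega


end

section


open Equiv Equiv.Perm

variable {β : Type*} [Fintype β] [DecidableEq β]

/-- Peeling one transposition off an involution. -/
lemma peel (ρ : Perm β) (hinv : ∀ z, ρ (ρ z) = z) {x : β} (hx : ρ x ≠ x) :
    ∀ ρ', ρ' = ρ * Equiv.swap x (ρ x) →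
      (∀ z, ρ' (ρ' z) = z) ∧ (∀ z, ρ' z ≠ z → ρ' z = ρ z) ∧
      ρ'.support = ρ.support \ {x, ρ x} ∧ Equiv.swap x (ρ x) * ρ' = ρ := by
  intro ρ' hρ'
  set y := ρ x with hy
  have hyx : y ≠ x := hx
  have happ : ∀ z, ρ' z = ρ (Equiv.swap x y z) := fun z => by rw [hρ']; rfl
  have hρ'x : ρ' x = x := by rw [happ, Equiv.swap_apply_left, hy]; exact hinv x
  have hρ'y : ρ' y = y := by rw [happ, Equiv.swap_apply_right, ← hy]
  have hother : ∀ z, z ≠ x → z ≠ y → ρ' z = ρ z := by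
    intro z h1 h2; rw [happ, Equiv.swap_apply_of_ne_of_ne h1 h2]
  have hρz : ∀ z, z ≠ x → z ≠ y → ρ z ≠ x ∧ ρ z ≠ y := by
    intro z h1 h2
    constructor
    · intro hc; apply h2; rw [hy, ← hc, hinv]
    · intro hc; apply h1
      have h3 := congrArg ρ hc
      rw [hinv] at h3
      rw [hy] at h3
      rw [hinv] at h3
      exact h3
  refine ⟨?_, ?_, ?_, ?_⟩
  · intro z
    rcases eq_or_ne z x with rfl | h1
    · rw [hρ'x, hρ'x]
    rcases eq_or_ne z y with rfl | h2
    · rw [hρ'y, hρ'y]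
    · obtain ⟨m1, m2⟩ := hρz z h1 h2
      rw [hother z h1 h2, hother _ m1 m2, hinv]
  · intro z hz
    rcases eq_or_ne z x with rfl | h1
    · exact absurd hρ'x hz
    rcases eq_or_ne z y with rfl | h2
    · exact absurd hρ'y hz
    · exact hother z h1 h2
  · ext z
    simp only [Equiv.Perm.mem_support, Finset.mem_sdiff, Finset.mem_insert,
      Finset.mem_singleton, not_or]
    constructor
    · intro hz
      rcases eq_or_ne z x with rfl | h1
      · exact absurd hρ'x hz
      rcases eq_or_ne z y with rfl | h2
      · exact absurd hρ'y hz
      · rw [hother z h1 h2] at hz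
        exact ⟨hz, h1, h2⟩
    · rintro ⟨hz, h1, h2⟩
      rw [hother z h1 h2]; exact hz
  · ext z
    simp only [Equiv.Perm.mul_apply]
    rcases eq_or_ne z x with rfl | h1
    · rw [hρ'x, Equiv.swap_apply_left, hy]
    rcases eq_or_ne z y with rfl | h2
    · rw [hρ'y, Equiv.swap_apply_right, hy, hinv]
    · obtain ⟨m1, m2⟩ := hρz z h1 h2
      rw [hother z h1 h2, Equiv.swap_apply_of_ne_of_ne m1 m2]

/-- Upper bound: multiplying by an involution with `≤ 2m` non-fixed points
increases the cycle count by at most `m`. -/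
lemma upper_bound : ∀ (m : ℕ) (ρ σ : Perm β), (∀ z, ρ (ρ z) = z) →
    ρ.support.card ≤ 2 * m → cycleCount (ρ * σ) ≤ cycleCount σ + m := by
  intro m
  induction m with
  | zero =>
    intro ρ σ hinv hcard
    have : ρ = 1 := Equiv.Perm.support_eq_empty_iff.1
      (Finset.card_eq_zero.1 (by omega))
    simp [this]
  | succ m ih =>
    intro ρ σ hinv hcard
    by_cases hρ : ρ = 1
    · simp [hρ]
    · have hne : ρ.support.Nonempty := by
        rw [Finset.nonempty_iff_ne_empty, Ne, Equiv.Perm.support_eq_empty_iff]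
        exact hρ
      obtain ⟨x, hx⟩ := hne
      rw [Equiv.Perm.mem_support] at hx
      obtain ⟨hinv', hagree', hsupp', hdecomp⟩ := peel ρ hinv hx _ rfl
      set ρ' := ρ * Equiv.swap x (ρ x)
      have hsub : {x, ρ x} ⊆ ρ.support := by
        intro z hz
        simp only [Finset.mem_insert, Finset.mem_singleton] at hz
        rcases hz with rfl | rfl
        · exact Equiv.Perm.mem_support.2 hx
        · refine Equiv.Perm.mem_support.2 (fun hc => ?_)
          have h3 := hinv x
          rw [hc] at h3
          exact hx h3
      have hcard' : ρ'.support.card ≤ 2 * m := by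
        rw [hsupp', Finset.card_sdiff_of_subset hsub, Finset.card_pair (Ne.symm hx)]
        omega
      have h1 : cycleCount (ρ' * σ) ≤ cycleCount σ + m := ih ρ' σ hinv' hcard'
      have h2 : ρ * σ = Equiv.swap x (ρ x) * (ρ' * σ) := by
        rw [← mul_assoc, hdecomp]
      rw [h2]
      calc cycleCount (Equiv.swap x (ρ x) * (ρ' * σ)) ≤ cycleCount (ρ' * σ) + 1 :=
            cyc_swap_le _ _ _
        _ ≤ cycleCount σ + (m + 1) := by omega


end

section


open Equiv Equiv.Perm



variable {N : ℕ} [NeZero N]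

lemma addRight_pow_apply (k : ℕ) (i : ZMod N) :
    ((Equiv.addRight (1 : ZMod N)) ^ k) i = i + (k : ZMod N) := by
  induction k with
  | zero => simp
  | succ m ih =>
    rw [pow_succ_apply, ih]
    simp only [Equiv.coe_addRight]
    push_cast
    ring

lemma sameCycle_addRight (i j : ZMod N) :
    (Equiv.addRight (1 : ZMod N)).SameCycle i j := by
  refine ⟨((j - i).val : ℤ), ?_⟩
  rw [zpow_natCast, addRight_pow_apply, ZMod.natCast_rightInverse]
  ring

lemma cyc_addRight_one : cycleCount (Equiv.addRight (1 : ZMod N)) = 1 := by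
  have hsub : Subsingleton (Quotient (sameCycleSetoid (Equiv.addRight (1 : ZMod N)))) := by
    constructor
    intro q1 q2
    refine Quotient.inductionOn₂ q1 q2 (fun i j => Quotient.sound (sameCycle_addRight i j))
  have hne : Nonempty (Quotient (sameCycleSetoid (Equiv.addRight (1 : ZMod N)))) :=
    ⟨Quotient.mk _ 0⟩
  rw [cycleCount, Nat.card_eq_one_iff_unique]
  exact ⟨hsub, hne⟩

/-- value increment along the circle -/
lemma val_step {z a : ZMod N} (h : (z - a).val + 1 < N) :
    (z + 1 - a).val = (z - a).val + 1 := by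
  have hN : 1 < N := by omega
  have h1 : z + 1 - a = (z - a) + 1 := by ring
  rw [h1, ZMod.val_add, ZMod.val_one'' (by omega), Nat.mod_eq_of_lt h]

lemma eq_of_val_sub_eq {z w a : ZMod N} (h : (z - a).val = (w - a).val) : z = w := by
  have h1 : z - a = w - a := by
    have h2 := ZMod.natCast_rightInverse (n := N) (z - a)
    have h3 := ZMod.natCast_rightInverse (n := N) (w - a)
    rw [← h2, ← h3, h]
  have := congrArg (· + a) h1
  simpa using this


end

section


open Equiv Equiv.Perm



lemma sameCycle_mem_closed {β : Type*} [Finite β] (σ : Perm β) (S : Set β)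
    (hS : ∀ z, z ∈ S → σ z ∈ S) {u v : β} (h : σ.SameCycle u v) (hu : u ∈ S) : v ∈ S := by
  obtain ⟨i, -, hi⟩ := h.exists_pow_eq'
  rw [← hi]
  clear hi
  induction i with
  | zero => simpa using hu
  | succ m ih => rw [pow_succ_apply]; exact hS _ ih

variable {N : ℕ} [NeZero N]

/-- The key reachability lemma: if no chord of `ρ` is linked with the arc from `a` to
`b₀`, and `ρ` fixes `a` and `b₀`, then `a` and `b₀` are on the same cycle of the
surgery permutation of `ρ`. -/
lemma reach (ρ : Perm (ZMod N)) (a b₀ : ZMod N) (hab : b₀ ≠ a)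
    (hb : ρ b₀ = b₀)
    (hin : ∀ z, ρ z ≠ z → (0 < (z - a).val ∧ (z - a).val < (b₀ - a).val ↔
        0 < (ρ z - a).val ∧ (ρ z - a).val < (b₀ - a).val)) :
    (ρ * Equiv.addRight (1 : ZMod N)).SameCycle a b₀ := by
  set σ := ρ * Equiv.addRight (1 : ZMod N) with hσ
  have happ : ∀ z, σ z = ρ (z + 1) := fun z => rfl
  set d := (b₀ - a).val with hd
  have hdpos : 0 < d := ZMod.val_pos.2 (sub_ne_zero.2 hab)
  have hdlt : d < N := ZMod.val_lt _
  have haa : (a - a).val = 0 := by rw [sub_self, ZMod.val_zero]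
  have hS2 : ∀ z, (z - a).val = d - 1 → σ z = b₀ := by
    intro z hz
    have h1 : (z + 1 - a).val = d := by rw [val_step (by omega), hz]; omega
    have h2 : z + 1 = b₀ := eq_of_val_sub_eq (by rw [h1])
    rw [happ, h2, hb]
  rcases eq_or_lt_of_le (Nat.succ_le_of_lt hdpos) with hd1 | hd2
  · exact ⟨1, by rw [zpow_one, hS2 a (by omega)]⟩
  · by_contra hnot
    have hS1 : ∀ z, (z - a).val ≤ d - 2 → 0 < (σ z - a).val ∧ (σ z - a).val ≤ d - 1 := by
      intro z hz
      have h1 : (z + 1 - a).val = (z - a).val + 1 := val_step (by omega)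
      rcases eq_or_ne (ρ (z + 1)) (z + 1) with hfix | hmove
      · rw [happ, hfix]; omega
      · have h2 := (hin (z + 1) hmove).1 (by omega)
        rw [happ]; omega
    have horbit : ∀ k : ℕ, ((σ ^ k) a - a).val ≤ d - 2 := by
      intro k
      induction k with
      | zero => simp only [pow_zero, Equiv.Perm.one_apply]; omega
      | succ m ih =>
        have h1 := hS1 _ ih
        rw [← pow_succ_apply] at h1
        rcases eq_or_ne (((σ ^ (m + 1)) a - a).val) (d - 1) with he | hne
        · exfalso
          apply hnot
          refine ⟨((m + 2 : ℕ) : ℤ), ?_⟩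
          rw [zpow_natCast]
          rw [show m + 2 = (m + 1) + 1 from rfl, pow_succ_apply]
          exact hS2 _ he
        · omega
    set o := orderOf σ with ho
    have hopos : 0 < o := orderOf_pos σ
    have hfix : (σ ^ o) a = a := by rw [pow_orderOf_eq_one]; rfl
    have h1 := hS1 _ (horbit (o - 1))
    rw [← pow_succ_apply] at h1
    rw [show o - 1 + 1 = o from by omega, hfix] at h1
    omega

/-- If two chords are linked, their endpoints end up on different cycles after the
first surgery. -/
lemma crossing_not_sameCycle (τ : Perm (ZMod N)) (a b : ZMod N)
    (hτa : τ a ≠ a) (hL : LinkedAt τ a b) :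
    ¬ (Equiv.swap a (τ a) * Equiv.addRight (1 : ZMod N)).SameCycle b (τ b) := by
  obtain ⟨hba, hbτa, hτba, hτbτa, hxor⟩ := hL
  set σ := Equiv.swap a (τ a) * Equiv.addRight (1 : ZMod N) with hσ
  have happ : ∀ z, σ z = Equiv.swap a (τ a) (z + 1) := fun z => rfl
  set d := (τ a - a).val with hd
  have hdpos : 0 < d := ZMod.val_pos.2 (sub_ne_zero.2 hτa)
  have hdlt : d < N := ZMod.val_lt _
  set S : Set (ZMod N) := {z | (z - a).val < d} with hS
  have hclosed : ∀ z, z ∈ S → σ z ∈ S := by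
    intro z hz
    simp only [hS, Set.mem_setOf_eq] at hz ⊢
    rcases eq_or_ne ((z - a).val) (d - 1) with he | hne
    · have h1 : (z + 1 - a).val = d := by rw [val_step (by omega), he]; omega
      have h2 : z + 1 = τ a := eq_of_val_sub_eq (by rw [h1])
      rw [happ, h2, Equiv.swap_apply_right, sub_self, ZMod.val_zero]
      omega
    · have h1 : (z + 1 - a).val = (z - a).val + 1 := val_step (by omega)
      have h2 : z + 1 ≠ a := fun hc => by
        rw [hc, sub_self, ZMod.val_zero] at h1; omega
      have h3 : z + 1 ≠ τ a := fun hc => by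
        rw [hc] at h1; rw [← hd] at h1; omega
      rw [happ, Equiv.swap_apply_of_ne_of_ne h2 h3]
      omega
  intro hc
  rcases hxor with ⟨h1, h3⟩ | ⟨h1, h3⟩
  · have h4 : τ b ∈ S := sameCycle_mem_closed σ S hclosed hc h1.2
    exact h3 ⟨ZMod.val_pos.2 (sub_ne_zero.2 hτba), h4⟩
  · have h4 : b ∈ S := sameCycle_mem_closed σ S hclosed hc.symm h1.2
    exact h3 ⟨ZMod.val_pos.2 (sub_ne_zero.2 hba), h4⟩


end

section


open Equiv Equiv.Perm

variable {N : ℕ} [NeZero N]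

/-- Lower bound on the number of cycles, for unlinked diagrams. -/
lemma lower_bound (τ : Equiv.Perm (ZMod N)) (hinv : Function.Involutive τ)
    (hfp : ∀ i, τ i ≠ i) (H : ∀ a b, ¬ LinkedAt τ a b) :
    ∀ (m : ℕ) (ρ : Equiv.Perm (ZMod N)), (∀ z, ρ (ρ z) = z) →
      (∀ z, ρ z ≠ z → ρ z = τ z) → ρ.support.card ≤ 2 * m →
      ρ.support.card + 2 ≤ 2 * cycleCount (ρ * Equiv.addRight (1 : ZMod N)) := by
  intro m
  induction m with
  | zero =>
    intro ρ hρinv hagree hcard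
    have h0 : ρ = 1 := Equiv.Perm.support_eq_empty_iff.1 (Finset.card_eq_zero.1 (by omega))
    rw [h0, one_mul, cyc_addRight_one]
    have h1 : (1 : Equiv.Perm (ZMod N)).support.card = 0 := by simp
    omega
  | succ m ih =>
    intro ρ hρinv hagree hcard
    by_cases hρ : ρ = 1
    · rw [hρ, one_mul, cyc_addRight_one]
      have h1 : (1 : Equiv.Perm (ZMod N)).support.card = 0 := by simp
      omega
    · have hne : ρ.support.Nonempty := by
        rw [Finset.nonempty_iff_ne_empty, Ne, Equiv.Perm.support_eq_empty_iff]
        exact hρ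
      obtain ⟨x, hxmem⟩ := hne
      have hx : ρ x ≠ x := Equiv.Perm.mem_support.1 hxmem
      obtain ⟨hinv', hagree', hsupp', hdecomp⟩ := peel ρ hρinv hx _ rfl
      set ρ' := ρ * Equiv.swap x (ρ x) with hρ'def
      have hρx : ρ x = τ x := hagree x hx
      have hτx : τ x ≠ x := hfp x
      -- ρ' fixes x and τ x
      have hfix : ∀ z, z = x ∨ z = ρ x → ρ' z = z := by
        intro z hz
        by_contra hcon
        have : z ∈ ρ'.support := Equiv.Perm.mem_support.2 hcon
        rw [hsupp'] at this
        simp only [Finset.mem_sdiff, Finset.mem_insert, Finset.mem_singleton, not_or] at this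
        rcases hz with rfl | rfl
        · exact this.2.1 rfl
        · exact this.2.2 rfl
      -- the reach lemma applies
      have hreach : (ρ' * Equiv.addRight (1 : ZMod N)).SameCycle x (τ x) := by
        apply reach ρ' x (τ x) hτx (by rw [← hρx]; exact hfix _ (Or.inr rfl))
        intro z hz
        have hz' : z ∈ ρ'.support := Equiv.Perm.mem_support.2 hz
        rw [hsupp'] at hz'
        simp only [Finset.mem_sdiff, Finset.mem_insert, Finset.mem_singleton, not_or] at hz'
        obtain ⟨hzs, hzx, hzρx⟩ := hz'
        have hρ'z : ρ' z = τ z := by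
          rw [hagree' z hz]
          exact hagree z (Equiv.Perm.mem_support.1 hzs)
        have hτzx : τ z ≠ x := fun hc => hzρx (by rw [hρx, ← hc, hinv z])
        have hτzτx : τ z ≠ τ x := fun hc => hzx (hinv.injective hc)
        have hnl := H x z
        rw [LinkedAt] at hnl
        push_neg at hnl
        have hxor := hnl hzx (hρx ▸ hzρx) hτzx hτzτx
        rw [Xor'] at hxor
        rw [not_xor] at hxor
        rw [hρ'z]
        unfold StrictlyInsideArc at hxor
        exact ⟨hxor.1, hxor.2⟩
      -- cycle count increases by one
      have hlt : cycleCount (ρ' * Equiv.addRight (1 : ZMod N)) <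
          cycleCount (ρ * Equiv.addRight (1 : ZMod N)) := by
        have h2 : ρ * Equiv.addRight (1 : ZMod N) =
            Equiv.swap x (ρ x) * (ρ' * Equiv.addRight (1 : ZMod N)) := by
          rw [← mul_assoc, hdecomp]
        rw [h2]
        exact cyc_lt_swap_of_sameCycle (Ne.symm hx) (hρx ▸ hreach)
      -- cardinalities
      have hsub : {x, ρ x} ⊆ ρ.support := by
        intro z hz
        simp only [Finset.mem_insert, Finset.mem_singleton] at hz
        rcases hz with rfl | rfl
        · exact hxmem
        · refine Equiv.Perm.mem_support.2 (fun hc => ?_)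
          have h3 := hρinv x
          rw [hc] at h3
          exact hx h3
      have hcards : ρ'.support.card + 2 = ρ.support.card := by
        rw [hsupp', Finset.card_sdiff_of_subset hsub, Finset.card_pair (Ne.symm hx)]
        have := Finset.card_le_card hsub
        rw [Finset.card_pair (Ne.symm hx)] at this
        omega
      have hih := ih ρ' hinv' (fun z hz => by
          rw [hagree' z hz]
          have hz' : z ∈ ρ'.support := Equiv.Perm.mem_support.2 hz
          rw [hsupp'] at hz'
          exact hagree z (Equiv.Perm.mem_support.1 (Finset.mem_sdiff.1 hz').1))
        (by omega)
      omega


end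

end SurgeryAux

open SurgeryAux Equiv Equiv.Perm in
/-- For a chord diagram with `n` chords, modelled as a fixed-point-free involution `τ`
of `ZMod (2*n)`, the surgery permutation `p i = τ (i+1)` has exactly `n + 1` cycles
if and only if no two chords are linked, equivalently if and only if the
interlacement matrix is the zero matrix. -/
theorem surgery_max_circles_iff_unlinked (n : ℕ) [NeZero n]
    (τ : Equiv.Perm (ZMod (2 * n)))
    (hinv : Function.Involutive τ) (hfp : ∀ i, τ i ≠ i) :
    (cycleCount (τ * Equiv.addRight (1 : ZMod (2 * n))) = n + 1 ↔
      ∀ a b : ZMod (2 * n), ¬ LinkedAt τ a b) ∧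
    (cycleCount (τ * Equiv.addRight (1 : ZMod (2 * n))) = n + 1 ↔
      interMatrix τ = 0) := by
  haveI : NeZero (2 * n) := ⟨by have h := NeZero.ne n; omega⟩
  classical
  have hM : (interMatrix τ = 0) ↔ ∀ a b : ZMod (2 * n), ¬ LinkedAt τ a b := by
    constructor
    · intro h a b hL
      have h2 := congrFun (congrFun h a) b
      rw [interMatrix, Matrix.of_apply, if_pos hL] at h2
      exact one_ne_zero h2
    · intro h
      funext a b
      rw [interMatrix, Matrix.of_apply, if_neg (h a b)]
      rfl
  have hsupp : τ.support = Finset.univ :=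
    Finset.eq_univ_iff_forall.2 (fun z => Equiv.Perm.mem_support.2 (hfp z))
  have hcard : τ.support.card = 2 * n := by
    rw [hsupp, Finset.card_univ, ZMod.card]
  have hupper : cycleCount (τ * Equiv.addRight (1 : ZMod (2 * n))) ≤ n + 1 := by
    have h1 := upper_bound n τ (Equiv.addRight (1 : ZMod (2 * n))) (fun z => hinv z)
      (by omega)
    rw [cyc_addRight_one] at h1
    omega
  have hiff : cycleCount (τ * Equiv.addRight (1 : ZMod (2 * n))) = n + 1 ↔
      ∀ a b : ZMod (2 * n), ¬ LinkedAt τ a b := by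
    constructor
    · intro heq
      by_contra hcon
      push_neg at hcon
      obtain ⟨a, b, hL⟩ := hcon
      obtain ⟨hba, hbτa, hτba, hτbτa, hxor⟩ := hL
      have h4 : ({a, τ a, b, τ b} : Finset (ZMod (2 * n))).card = 4 := by
        rw [Finset.card_insert_of_notMem (by
            simp only [Finset.mem_insert, Finset.mem_singleton, not_or]
            exact ⟨Ne.symm (hfp a), Ne.symm hba, Ne.symm hτba⟩),
          Finset.card_insert_of_notMem (by
            simp only [Finset.mem_insert, Finset.mem_singleton, not_or]
            exact ⟨Ne.symm hbτa, Ne.symm hτbτa⟩),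
          Finset.card_pair (Ne.symm (hfp b))]
      have hn2 : 2 ≤ n := by
        have h5 := Finset.card_le_univ ({a, τ a, b, τ b} : Finset (ZMod (2 * n)))
        rw [h4, ZMod.card] at h5
        omega
      set t₁ := Equiv.swap a (τ a) with ht₁
      set t₂ := Equiv.swap b (τ b) with ht₂
      set ρ₃ := τ * t₁ * t₂ with hρ₃
      have happ₃ : ∀ z, ρ₃ z = τ (t₁ (t₂ z)) := fun z => rfl
      have h_a : ρ₃ a = a := by
        rw [happ₃, ht₂, Equiv.swap_apply_of_ne_of_ne (Ne.symm hba) (Ne.symm hτba),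
          ht₁, Equiv.swap_apply_left, hinv a]
      have h_τa : ρ₃ (τ a) = τ a := by
        rw [happ₃, ht₂, Equiv.swap_apply_of_ne_of_ne (Ne.symm hbτa) (Ne.symm hτbτa),
          ht₁, Equiv.swap_apply_right]
      have h_b : ρ₃ b = b := by
        rw [happ₃, ht₂, Equiv.swap_apply_left, ht₁,
          Equiv.swap_apply_of_ne_of_ne hτba hτbτa, hinv b]
      have h_τb : ρ₃ (τ b) = τ b := by
        rw [happ₃, ht₂, Equiv.swap_apply_right, ht₁,
          Equiv.swap_apply_of_ne_of_ne hba hbτa]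
      have h_oth : ∀ z, z ≠ a → z ≠ τ a → z ≠ b → z ≠ τ b → ρ₃ z = τ z := by
        intro z h1 h2 h3 h4'
        rw [happ₃, ht₂, Equiv.swap_apply_of_ne_of_ne h3 h4', ht₁,
          Equiv.swap_apply_of_ne_of_ne h1 h2]
      have hρ₃inv : ∀ z, ρ₃ (ρ₃ z) = z := by
        intro z
        rcases eq_or_ne z a with rfl | h1
        · rw [h_a, h_a]
        rcases eq_or_ne z (τ a) with rfl | h2
        · rw [h_τa, h_τa]
        rcases eq_or_ne z b with rfl | h3
        · rw [h_b, h_b]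
        rcases eq_or_ne z (τ b) with rfl | h4'
        · rw [h_τb, h_τb]
        · rw [h_oth z h1 h2 h3 h4']
          have m1 : τ z ≠ a := fun hc => h2 (by rw [← hc, hinv z])
          have m2 : τ z ≠ τ a := fun hc => h1 (hinv.injective hc)
          have m3 : τ z ≠ b := fun hc => h4' (by rw [← hc, hinv z])
          have m4 : τ z ≠ τ b := fun hc => h3 (hinv.injective hc)
          rw [h_oth _ m1 m2 m3 m4, hinv z]
      have hsupp₃ : ρ₃.support ⊆ Finset.univ \ {a, τ a, b, τ b} := by
        intro z hz
        have hz' : ρ₃ z ≠ z := Equiv.Perm.mem_support.1 hz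
        refine Finset.mem_sdiff.2 ⟨Finset.mem_univ z, ?_⟩
        simp only [Finset.mem_insert, Finset.mem_singleton, not_or]
        exact ⟨fun hc => hz' (by rw [hc, h_a]), fun hc => hz' (by rw [hc, h_τa]),
          fun hc => hz' (by rw [hc, h_b]), fun hc => hz' (by rw [hc, h_τb])⟩
      have hcard₃ : ρ₃.support.card ≤ 2 * (n - 2) := by
        have h5 := Finset.card_le_card hsupp₃
        rw [Finset.card_sdiff_of_subset (Finset.subset_univ _), Finset.card_univ, ZMod.card, h4] at h5
        omega
      have hdec : τ * Equiv.addRight (1 : ZMod (2 * n)) =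
          ρ₃ * (t₂ * (t₁ * Equiv.addRight (1 : ZMod (2 * n)))) := by
        rw [hρ₃]
        simp only [mul_assoc]
        rw [Equiv.swap_mul_self_mul, Equiv.swap_mul_self_mul]
      have h5 : cycleCount (t₁ * Equiv.addRight (1 : ZMod (2 * n))) ≤ 2 := by
        have h6 := cyc_swap_le (Equiv.addRight (1 : ZMod (2 * n))) a (τ a)
        rw [cyc_addRight_one] at h6
        exact h6
      have h6 : cycleCount (t₂ * (t₁ * Equiv.addRight (1 : ZMod (2 * n)))) <
          cycleCount (t₁ * Equiv.addRight (1 : ZMod (2 * n))) :=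
        cyc_swap_lt_of_not_sameCycle (Ne.symm (hfp b))
          (crossing_not_sameCycle τ a b (hfp a) ⟨hba, hbτa, hτba, hτbτa, hxor⟩)
      have h7 := upper_bound (n - 2) ρ₃
        (t₂ * (t₁ * Equiv.addRight (1 : ZMod (2 * n)))) hρ₃inv hcard₃
      rw [hdec] at heq
      omega
    · intro H
      have hlow := lower_bound τ hinv hfp H n τ (fun z => hinv z)
        (fun z _ => rfl) (by omega)
      omega
  exact ⟨hiff, hiff.trans hM.symm⟩
end

section
/- Let D be a finite type, let σ and α be permutations of D with α a fixed-point-free involution. Then the following are equivalent: (1) there exists f : D → Bool such that f(α d) ≠ f(d) and f(σ d) ≠ f(d) for all d ∈ D (the source-sink condition); (2) there exists col : D → Bool such that col(σ(α d)) = col(d) for all d (col is constant on faces) and col(α d) ≠ col(d) for all d (faces sharing an edge get different colors), i.e., the rotation system admits a checkerboard face 2-coloring. -/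
/-- **Source-sink condition ⇔ checkerboard colorability.**
Let `(D, σ, α)` be a rotation system: `D` a finite set of darts, `σ` a permutation
whose orbits are the vertices (cyclic order of darts around each vertex), `α` a
fixed-point-free involution whose orbits are the edges. The faces are the orbits of
`σ ∘ α`, and the darts `d` and `α d` lie in the two faces adjacent along their edge.
Then the source-sink condition (an alternating in/out orientation of darts, i.e.
`f : D → Bool` with `f ∘ α = not ∘ f` and `f ∘ σ = not ∘ f`) holds if and only if
the faces admit a checkerboard 2-coloring (a `col : D → Bool` constant on faces with
faces sharing an edge having different colors). -/
theorem sourceSink_iff_checkerboard {D : Type*} [Fintype D]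
    (σ α : Equiv.Perm D) (hinv : Function.Involutive α) (hfp : ∀ d, α d ≠ d) :
    (∃ f : D → Bool, ∀ d, f (α d) ≠ f d ∧ f (σ d) ≠ f d) ↔
    (∃ col : D → Bool, (∀ d, col (σ (α d)) = col d) ∧ (∀ d, col (α d) ≠ col d)) := by
  constructor
  · rintro ⟨f, hf⟩
    refine ⟨f, fun d => ?_, fun d => (hf d).1⟩
    have h1 := (hf (α d)).2
    have h2 := (hf d).1
    revert h1 h2
    cases f (σ (α d)) <;> cases f (α d) <;> cases f d <;> simp
  · rintro ⟨col, hface, hedge⟩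
    refine ⟨col, fun d => ⟨hedge d, ?_⟩⟩
    have h := hface (α d)
    rw [hinv d] at h
    rw [h]
    exact hedge d
end

section
/- Let D be a finite type, let σ and α be permutations of D with α a fixed-point-free involution, and suppose the subgroup of permutations generated by σ and α acts transitively on D (the graph is connected). Define the double cover on D × ZMod 2 by σ'(d, i) = (σ d, i+1) and α'(d, i) = (α d, i+1). Then: (a) α' is a fixed-point-free involution, and the function f(d, i) = (i = 0) satisfies f(α'(x)) ≠ f(x) and f(σ'(x)) ≠ f(x) for all x, so the double cover satisfies the source-sink condition; and (b) if no function g : D → Bool satisfies g(α d) ≠ g(d) and g(σ d) ≠ g(d) for all d ∈ D (i.e., the original does not satisfy the source-sink condition), then the subgroup generated by σ' and α' acts transitively on D × ZMod 2 (the double cover is connected). -/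
/-- **The source-sink double cover.** Let `(D, σ, α)` be a connected rotation system:
`σ` a permutation of the finite dart set `D` (orbits = vertices), `α` a
fixed-point-free involution (orbits = edges), with the subgroup generated by `σ` and
`α` acting transitively on `D`. Define the double cover on `D × ZMod 2` by
`σ' (d, i) = (σ d, i + 1)` and `α' (d, i) = (α d, i + 1)`. Then:
(a) `α'` is a fixed-point-free involution and `f (d, i) = (i = 0)` witnesses the
source-sink condition for the double cover; and
(b) if the original rotation system does not satisfy the source-sink condition, then
the subgroup generated by `σ'` and `α'` acts transitively on `D × ZMod 2`. -/
theorem doubleCover_sourceSink {D : Type*} [Fintype D]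
    (σ α : Equiv.Perm D) (hinv : Function.Involutive α) (hfp : ∀ d, α d ≠ d)
    (htrans : ∀ x y : D, ∃ g ∈ Subgroup.closure ({σ, α} : Set (Equiv.Perm D)), g x = y)
    (σ' α' : Equiv.Perm (D × ZMod 2))
    (hσ' : ∀ x : D × ZMod 2, σ' x = (σ x.1, x.2 + 1))
    (hα' : ∀ x : D × ZMod 2, α' x = (α x.1, x.2 + 1)) :
    (Function.Involutive α' ∧ (∀ x, α' x ≠ x) ∧
      (∀ x : D × ZMod 2,
        (decide ((α' x).2 = 0) ≠ decide (x.2 = 0)) ∧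
        (decide ((σ' x).2 = 0) ≠ decide (x.2 = 0)))) ∧
    ((¬ ∃ g : D → Bool, ∀ d, g (α d) ≠ g d ∧ g (σ d) ≠ g d) →
      ∀ x y : D × ZMod 2,
        ∃ g ∈ Subgroup.closure ({σ', α'} : Set (Equiv.Perm (D × ZMod 2))), g x = y) := by
  classical
  have two : ∀ i : ZMod 2, i = 0 ∨ i = 1 := by decide
  have addkey : ∀ a b : ZMod 2, a ≠ b → a = b + 1 := by decide
  have decneq : ∀ a : ZMod 2, decide (a + 1 = 0) ≠ decide (a = 0) := by decide
  constructor
  · refine ⟨?_, ?_, ?_⟩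
    · intro x
      rw [hα', hα']
      have h11 : x.2 + 1 + 1 = x.2 := by
        have : (1 : ZMod 2) + 1 = 0 := by decide
        rw [add_assoc, this, add_zero]
      simp [hinv x.1, h11]
    · intro x hx
      have h1 := congrArg Prod.fst hx
      rw [hα'] at h1
      exact hfp x.1 h1
    · intro x
      constructor
      · rw [hα']; exact decneq x.2
      · rw [hσ']; exact decneq x.2
  · intro hns x y
    set C' := Subgroup.closure ({σ', α'} : Set (Equiv.Perm (D × ZMod 2))) with hC'
    have hσ'mem : σ' ∈ C' := Subgroup.subset_closure (Set.mem_insert _ _)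
    have hα'mem : α' ∈ C' := Subgroup.subset_closure (Set.mem_insert_of_mem _ rfl)
    -- every element of C' is equivariant w.r.t. the deck transformation
    have equiv : ∀ h ∈ C', ∀ z : D × ZMod 2,
        h (z.1, z.2 + 1) = ((h z).1, (h z).2 + 1) := by
      intro h hh
      induction hh using Subgroup.closure_induction with
      | mem g hg =>
        rcases hg with hg | hg
        · subst hg; intro z; rw [hσ', hσ']
        · simp only [Set.mem_singleton_iff] at hg; subst hg; intro z; rw [hα', hα']
      | one => intro z; simp
      | mul g1 g2 _ _ ih1 ih2 =>
        intro z
        show g1 (g2 (z.1, z.2 + 1)) = _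
        rw [ih2 z, ih1 (g2 z)]
        rfl
      | inv g _ ih =>
        intro z
        have h1 : g ((g⁻¹ z).1, (g⁻¹ z).2 + 1) = (z.1, z.2 + 1) := by
          rw [ih (g⁻¹ z)]
          simp
        have := congrArg (fun w => g⁻¹ w) h1
        simpa using this.symm
    -- lifting elements of the base closure
    have lift : ∀ g ∈ Subgroup.closure ({σ, α} : Set (Equiv.Perm D)),
        ∃ c : ZMod 2, ∃ g' ∈ C', ∀ z : D × ZMod 2, g' z = (g z.1, z.2 + c) := by
      intro g hg
      induction hg using Subgroup.closure_induction with
      | mem g hg =>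
        rcases hg with hg | hg
        · subst hg; exact ⟨1, σ', hσ'mem, fun z => hσ' z⟩
        · simp only [Set.mem_singleton_iff] at hg
          subst hg; exact ⟨1, α', hα'mem, fun z => hα' z⟩
      | one => exact ⟨0, 1, one_mem _, fun z => by simp⟩
      | mul g1 g2 _ _ ih1 ih2 =>
        obtain ⟨c1, g1', hm1, he1⟩ := ih1
        obtain ⟨c2, g2', hm2, he2⟩ := ih2
        refine ⟨c2 + c1, g1' * g2', mul_mem hm1 hm2, fun z => ?_⟩
        show g1' (g2' z) = _
        rw [he2 z, he1 (g2 z.1, z.2 + c2)]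
        simp only [add_assoc]
        rfl
      | inv g _ ih =>
        obtain ⟨c, g', hm, he⟩ := ih
        refine ⟨-c, g'⁻¹, inv_mem hm, fun z => ?_⟩
        have h1 : g' (g⁻¹ z.1, z.2 + -c) = z := by
          rw [he]
          simp
          rw [add_assoc, CharTwo.add_self_eq_zero, add_zero]
        have := congrArg (fun w => g'⁻¹ w) h1
        simpa using this.symm
    obtain ⟨g, hg, hgx⟩ := htrans x.1 y.1
    obtain ⟨c, g', hm, he⟩ := lift g hg
    have h1 : g' x = (y.1, x.2 + c) := by rw [he x, hgx]
    by_cases hc : x.2 + c = y.2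
    · exact ⟨g', hm, by rw [h1, hc]⟩
    · have hc1 : x.2 + c = y.2 + 1 := addkey _ _ hc
      -- deck swap at y.1 exists
      set b := y.1 with hb
      have key : ∃ h ∈ C', h (b, (0 : ZMod 2)) = (b, 1) := by
        by_contra hno
        push_neg at hno
        set R : D × ZMod 2 → Prop := fun z => ∃ h ∈ C', h (b, (0 : ZMod 2)) = z with hR
        have hRex : ∀ d : D, ∃ i, R (d, i) := by
          intro d
          obtain ⟨g0, hg0, hg0b⟩ := htrans b d
          obtain ⟨c0, g0', hm0, he0⟩ := lift g0 hg0
          exact ⟨0 + c0, g0', hm0, by rw [he0, hg0b]⟩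
        have hRuniq : ∀ d i, R (d, i) → ¬ R (d, i + 1) := by
          rintro d i ⟨h1, hh1, e1⟩ ⟨h2, hh2, e2⟩
          apply hno (h1⁻¹ * h2) (mul_mem (inv_mem hh1) hh2)
          show h1⁻¹ (h2 (b, 0)) = (b, 1)
          rw [e2]
          have hq : h1 (b, (0 : ZMod 2) + 1) = (d, i + 1) := by
            rw [equiv h1 hh1 (b, 0), e1]
          have hq' : h1 (b, (1 : ZMod 2)) = (d, i + 1) := by
            simpa using hq
          have := congrArg (fun w => h1⁻¹ w) hq'
          simpa using this.symm
        -- one-step moves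
        have stepF : ∀ (p : Equiv.Perm D) (p' : Equiv.Perm (D × ZMod 2)), p' ∈ C' →
            (∀ z : D × ZMod 2, p' z = (p z.1, z.2 + 1)) →
            ∀ d i, R (d, i) → R (p d, i + 1) := by
          rintro p p' hp' hp d i ⟨h, hh, e⟩
          exact ⟨p' * h, mul_mem hp' hh, by show p' (h (b, 0)) = _; rw [e, hp]⟩
        have stepB : ∀ (p : Equiv.Perm D) (p' : Equiv.Perm (D × ZMod 2)), p' ∈ C' →
            (∀ z : D × ZMod 2, p' z = (p z.1, z.2 + 1)) →
            ∀ d i, R (p d, i + 1) → R (d, i) := by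
          rintro p p' hp' hp d i ⟨h, hh, e⟩
          refine ⟨p'⁻¹ * h, mul_mem (inv_mem hp') hh, ?_⟩
          show p'⁻¹ (h (b, 0)) = _
          rw [e]
          have : p' (d, i) = (p d, i + 1) := hp (d, i)
          have := congrArg (fun w => p'⁻¹ w) this
          simpa using this.symm
        have hone : ∀ d, (R (d, 0) ∧ ¬ R (d, 1)) ∨ (R (d, 1) ∧ ¬ R (d, 0)) := by
          intro d
          obtain ⟨i, hi⟩ := hRex d
          rcases two i with h0 | h0 <;> subst h0
          · left
            refine ⟨hi, ?_⟩
            have := hRuniq d 0 hi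
            simpa using this
          · right
            refine ⟨hi, ?_⟩
            have := hRuniq d 1 hi
            have h110 : (1 : ZMod 2) + 1 = 0 := by decide
            rwa [h110] at this
        apply hns
        refine ⟨fun d => decide (R (d, 0)), fun d => ?_⟩
        have h110 : (1 : ZMod 2) + 1 = 0 := by decide
        have hαiff : R (α d, 0) ↔ R (d, 1) := by
          constructor
          · intro h
            have := stepB α α' hα'mem hα' d 1 (by rwa [h110])
            exact this
          · intro h
            have := stepF α α' hα'mem hα' d 1 h
            rwa [h110] at this
        have hσiff : R (σ d, 0) ↔ R (d, 1) := by
          constructor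
          · intro h
            have := stepB σ σ' hσ'mem hσ' d 1 (by rwa [h110])
            exact this
          · intro h
            have := stepF σ σ' hσ'mem hσ' d 1 h
            rwa [h110] at this
        constructor
        · simp only [ne_eq, decide_eq_decide]
          intro hiff
          rcases hone d with ⟨hr, hn⟩ | ⟨hr, hn⟩
          · exact hn (hαiff.mp (hiff.mpr hr))
          · exact hn (hiff.mp (hαiff.mpr hr))
        · simp only [ne_eq, decide_eq_decide]
          intro hiff
          rcases hone d with ⟨hr, hn⟩ | ⟨hr, hn⟩
          · exact hn (hσiff.mp (hiff.mpr hr))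
          · exact hn (hiff.mp (hσiff.mpr hr))
      obtain ⟨h, hh, hswap⟩ := key
      -- produce k with k (y.1, y.2 + 1) = y
      have hkey : ∃ k ∈ C', k (y.1, y.2 + 1) = y := by
        rcases two y.2 with h0 | h0
        · refine ⟨h⁻¹, inv_mem hh, ?_⟩
          have := congrArg (fun w => h⁻¹ w) hswap
          rw [show h⁻¹ (h (b, 0)) = (b, 0) from h.symm_apply_apply _] at this
          rw [h0]
          have h01 : (0 : ZMod 2) + 1 = 1 := by decide
          rw [h01, ← this]
          rw [← h0, Prod.mk.eta]
        · refine ⟨h, hh, ?_⟩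
          rw [h0]
          have h110 : (1 : ZMod 2) + 1 = 0 := by decide
          rw [h110, hswap, ← h0, Prod.mk.eta]
      obtain ⟨k, hk, hke⟩ := hkey
      refine ⟨k * g', mul_mem hk hm, ?_⟩
      show k (g' x) = y
      rw [h1, hc1, hke]
end
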